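/- Let w and w' be two odd closed walks in a signed graph (G,τ) with the same first vertex. Then both w + w' and w⁻¹ + w' are even closed walks, and the associated binomials satisfy B_{w⁻¹ + w'} = ± B_{w + w'}. -/

import Mathlib

variable {V : Type*}

/-- The product of τ(e,u)·τ(e,v) over all edge terms e = uv of a walk in a signed
graph (G,τ), where the sign τ assigns a unit ±1 to each incidence. -/
def walkSign (G : SimpleGraph V) (τ : Sym2 V → V → ℤˣ) :
    {u v : V} → G.Walk u v → ℤˣ
  | _, _, SimpleGraph.Walk.nil => 1
  | _, _, @SimpleGraph.Walk.cons _ _ a b _ _ p =>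
      τ s(a, b) a * τ s(a, b) b * walkSign G τ p

/-- μ of a closed walk: (-1)^(number of unbalanced vertex terms). -/
def mu (G : SimpleGraph V) (τ : Sym2 V → V → ℤˣ) {u v : V} (w : G.Walk u v) : ℤˣ :=
  (-1) ^ w.length * walkSign G τ w

/-- The i-th dart (oriented edge term) of a walk. -/
def dartAt {G : SimpleGraph V} {u v : V} (w : G.Walk u v) (i : Fin w.length) :
    G.Dart :=
  w.darts.get (Fin.cast w.length_darts.symm i)

/-- Cyclic successor on `Fin n`. -/
def csucc {n : ℕ} (i : Fin n) : Fin n := ⟨(i + 1) % n, Nat.mod_lt _ i.pos⟩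

/-- `FlipRel G τ w κ`: κ assigns a sign ±1 to each edge term of the closed walk w,
flipping exactly at the unbalanced vertex terms (cyclically).  Such a κ records (up
to a global sign) the parity of the balanced section containing each edge term in the
balanced section-decomposition of w, and a κ satisfying this relation exists iff w is
even. -/
def FlipRel (G : SimpleGraph V) (τ : Sym2 V → V → ℤˣ) {v : V} (w : G.Walk v v)
    (κ : Fin w.length → ℤˣ) : Prop :=
  ∀ i : Fin w.length,
    κ (csucc i) =
      -(τ (dartAt w i).edge (dartAt w i).toProd.2 *
          τ (dartAt w (csucc i)).edge (dartAt w i).toProd.2) * κ i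

open MvPolynomial in
/-- The positive monomial B_w⁺ of the binomial associated with an even closed walk w,
relative to the section-parity assignment κ: the product of all edge terms lying in
the sections with κ = 1. -/
noncomputable def Bpos (K : Type*) [Field K] {G : SimpleGraph V} {v : V}
    (w : G.Walk v v) (κ : Fin w.length → ℤˣ) : MvPolynomial G.edgeSet K :=
  ∏ i ∈ Finset.univ.filter (fun i => κ i = 1),
    X (⟨(dartAt w i).edge, (dartAt w i).edge_mem⟩ : G.edgeSet)

open MvPolynomial in
/-- The negative monomial B_w⁻: the product of all edge terms in sections with κ = -1. -/
noncomputable def Bneg (K : Type*) [Field K] {G : SimpleGraph V} {v : V}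
    (w : G.Walk v v) (κ : Fin w.length → ℤˣ) : MvPolynomial G.edgeSet K :=
  ∏ i ∈ Finset.univ.filter (fun i => κ i = -1),
    X (⟨(dartAt w i).edge, (dartAt w i).edge_mem⟩ : G.edgeSet)

open MvPolynomial in
/-- The toric ideal I_{(G,τ)} of a signed graph: the ideal of K[e : e ∈ E(G)]
generated by the binomials e^{b⁺} - e^{b⁻} over integer vectors b in the kernel of
the incidence matrix A(G,τ). -/
noncomputable def toricIdeal (K : Type*) [Field K] [DecidableEq V]
    (G : SimpleGraph V) [Fintype G.edgeSet] (τ : Sym2 V → V → ℤˣ) :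
    Ideal (MvPolynomial G.edgeSet K) :=
  Ideal.span { f | ∃ b : G.edgeSet → ℤ,
    (∀ v : V, ∑ e : G.edgeSet,
      (if v ∈ (e : Sym2 V) then (τ e v : ℤ) else 0) * b e = 0) ∧
    f = (∏ e : G.edgeSet, X e ^ (b e).toNat)
      - ∏ e : G.edgeSet, X e ^ (-(b e)).toNat }

namespace Aux

variable {G : SimpleGraph V} {τ : Sym2 V → V → ℤˣ}

/-- sign contribution of a single dart -/
def dsign (τ : Sym2 V → V → ℤˣ) (d : G.Dart) : ℤˣ :=
  τ d.edge d.toProd.1 * τ d.edge d.toProd.2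

lemma dsign_symm (d : G.Dart) : dsign τ d.symm = dsign τ d := by
  simp [dsign, SimpleGraph.Dart.edge_symm, SimpleGraph.Dart.symm, SimpleGraph.Dart.edge, mul_comm]
  rw [Sym2.eq_swap]

lemma walkSign_eq_prod {u v : V} (p : G.Walk u v) :
    walkSign G τ p = (p.darts.map (dsign τ)).prod := by
  induction p with
  | nil => simp [walkSign]
  | cons h q ih =>
      simp [walkSign, SimpleGraph.Walk.darts, ih, dsign, SimpleGraph.Dart.edge]

lemma walkSign_append {u v x : V} (p : G.Walk u v) (q : G.Walk v x) :
    walkSign G τ (p.append q) = walkSign G τ p * walkSign G τ q := by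
  simp [walkSign_eq_prod, SimpleGraph.Walk.darts_append]

lemma walkSign_reverse {u v : V} (p : G.Walk u v) :
    walkSign G τ p.reverse = walkSign G τ p := by
  simp [walkSign_eq_prod, SimpleGraph.Walk.darts_reverse, List.prod_reverse,
    List.map_map, Function.comp_def, dsign_symm]

lemma mu_append {v : V} (p q : G.Walk v v) :
    mu G τ (p.append q) = mu G τ p * mu G τ q := by
  simp only [mu, SimpleGraph.Walk.length_append, walkSign_append, pow_add]
  exact mul_mul_mul_comm _ _ _ _

lemma mu_reverse {u v : V} (p : G.Walk u v) : mu G τ p.reverse = mu G τ p := by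
  simp [mu, walkSign_reverse]

end Aux

namespace Aux2
open SimpleGraph
variable {G : SimpleGraph V} {τ : Sym2 V → V → ℤˣ}

lemma dartAt_eq {u v : V} (p : G.Walk u v) (i : Fin p.length) :
    dartAt p i = p.darts[i.val]'(by simp) := rfl

lemma darts_fst_zero {u v : V} (p : G.Walk u v) (h : 0 < p.length) :
    (p.darts[0]'(by simpa using h)).toProd.1 = u := by
  cases p with
  | nil => simp at h
  | cons h q => simp [SimpleGraph.Walk.darts]

lemma darts_snd_last {u v : V} (p : G.Walk u v) (h : 0 < p.length) :
    (p.darts[p.length - 1]'(by simp; omega)).toProd.2 = v := by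
  induction p with
  | nil => simp at h
  | @cons a b c hadj q ih =>
      cases q with
      | nil => simp [SimpleGraph.Walk.darts]
      | cons h' r =>
          have := ih (by simp)
          simpa [SimpleGraph.Walk.darts] using this

lemma darts_chain {u v : V} (p : G.Walk u v) (k : ℕ) (h : k + 1 < p.length) :
    (p.darts[k]'(by simp; omega)).toProd.2 = (p.darts[k+1]'(by simpa using h)).toProd.1 :=
  List.isChain_iff_getElem.mp p.isChain_dartAdj_darts k (by simp; omega)

lemma darts_chain' {u v : V} (p : G.Walk u v) (k k' : ℕ) (hk' : k' = k + 1)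
    (hlen : k + 1 < p.length) (h1 : k < p.darts.length) (h2 : k' < p.darts.length) :
    (p.darts[k]'h1).toProd.2 = (p.darts[k']'h2).toProd.1 := by
  subst hk'
  exact darts_chain p k hlen

end Aux2

namespace Aux3
variable {G : SimpleGraph V} {τ : Sym2 V → V → ℤˣ}

lemma csucc_val_of_lt {n : ℕ} (i : Fin n) (h : i.val + 1 < n) : (csucc i).val = i.val + 1 :=
  Nat.mod_eq_of_lt h

lemma csucc_val_last {n : ℕ} (i : Fin n) (h : i.val + 1 = n) : (csucc i).val = 0 := by
  simp [csucc, h]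

lemma sq_one (a : ℤˣ) : a * a = 1 := Int.units_mul_self a

lemma cancel_left {a b c : ℤˣ} (h : a * b = a * c) : b = c := mul_left_cancel h

lemma fliprel_unique {v : V} (u : G.Walk v v) {κ κ' : Fin u.length → ℤˣ}
    (h : FlipRel G τ u κ) (h' : FlipRel G τ u κ') : κ' = κ ∨ κ' = -κ := by
  rcases Nat.eq_zero_or_pos u.length with h0 | hpos
  · left; funext i; exact absurd i.isLt (by omega)
  · have key : ∀ j (hj : j < u.length),
        κ ⟨j, hj⟩ * κ' ⟨j, hj⟩ = κ ⟨0, hpos⟩ * κ' ⟨0, hpos⟩ := by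
      intro j
      induction j with
      | zero => intro _; rfl
      | succ k ih =>
          intro hj
          have hk : k < u.length := by omega
          have hc : csucc (⟨k, hk⟩ : Fin u.length) = ⟨k + 1, hj⟩ :=
            Fin.ext (csucc_val_of_lt _ hj)
          have e1 := h ⟨k, hk⟩
          have e2 := h' ⟨k, hk⟩
          rw [hc] at e1 e2
          rw [e1, e2, mul_mul_mul_comm, sq_one, one_mul]
          exact ih hk
    rcases Int.units_eq_one_or (κ ⟨0, hpos⟩ * κ' ⟨0, hpos⟩) with he | he
    · left
      funext i
      have hthis := key i.val i.isLt
      rw [Fin.eta, he] at hthis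
      have h4 : κ i * (κ i * κ' i) = κ i * 1 := by rw [hthis]
      rw [← mul_assoc, sq_one, one_mul, mul_one] at h4
      exact h4
    · right
      funext i
      have hthis := key i.val i.isLt
      rw [Fin.eta, he] at hthis
      have h4 : κ i * (κ i * κ' i) = κ i * -1 := by rw [hthis]
      rw [← mul_assoc, sq_one, one_mul, mul_neg_one] at h4
      exact h4

end Aux3

namespace Aux4
open Aux Aux3
variable {G : SimpleGraph V} {τ : Sym2 V → V → ℤˣ}

lemma alg_step (S P E0 A Bv C : ℤˣ) :
    -(Bv * C) * (S * P * (E0 * A)) = S * -1 * (P * (A * Bv)) * (E0 * C) := by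
  rcases Int.units_eq_one_or S with rfl | rfl <;>
  rcases Int.units_eq_one_or P with rfl | rfl <;>
  rcases Int.units_eq_one_or E0 with rfl | rfl <;>
  rcases Int.units_eq_one_or A with rfl | rfl <;>
  rcases Int.units_eq_one_or Bv with rfl | rfl <;>
  rcases Int.units_eq_one_or C with rfl | rfl <;> decide

lemma telescope {v : V} (u : G.Walk v v) {κ : Fin u.length → ℤˣ}
    (h : FlipRel G τ u κ) (h0 : 0 < u.length) (j : ℕ) (hj : j < u.length) :
      κ ⟨j, hj⟩ * κ ⟨0, h0⟩ =
        ((-1 : ℤˣ)) ^ j * ((u.darts.map (Aux.dsign τ)).take j).prod *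
          (τ (u.darts[0]'(by simpa using h0)).edge (u.darts[0]'(by simpa using h0)).toProd.1 *
           τ (u.darts[j]'(by simpa using hj)).edge (u.darts[j]'(by simpa using hj)).toProd.1) := by
  induction j with
  | zero => simp [sq_one]
  | succ k ih =>
      have hk : k < u.length := by omega
      have hc : csucc (⟨k, hk⟩ : Fin u.length) = ⟨k + 1, hj⟩ :=
        Fin.ext (csucc_val_of_lt _ hj)
      have e1 := h ⟨k, hk⟩
      rw [hc] at e1
      simp only [Aux2.dartAt_eq] at e1
      have hchain := Aux2.darts_chain u k hj
      rw [List.prod_take_succ _ k (by simp; omega), List.getElem_map]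
      rw [e1, mul_assoc, ih hk, pow_succ, Aux.dsign, ← hchain]
      exact alg_step _ _ _ _ _ _

end Aux4

namespace Aux5
open SimpleGraph
variable {G : SimpleGraph V} {τ : Sym2 V → V → ℤˣ} {v : V}

lemma u_dart_lt (w w' : G.Walk v v) (k : ℕ) (hk : k < w.length)
    (h2 : k < (w.append w').darts.length) :
    (w.append w').darts[k] = w.darts[k]'(by simpa using hk) := by
  simp only [SimpleGraph.Walk.darts_append]
  exact List.getElem_append_left (by simpa using hk)

lemma u_dart_ge (w w' : G.Walk v v) (k : ℕ) (hk : w.length ≤ k)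
    (h2 : k < (w.append w').darts.length) :
    (w.append w').darts[k] = w'.darts[k - w.length]'(by
      simp only [SimpleGraph.Walk.length_darts]
      have := h2; simp only [SimpleGraph.Walk.darts_append, List.length_append,
        SimpleGraph.Walk.length_darts] at this
      omega) := by
  simp only [SimpleGraph.Walk.darts_append]
  rw [List.getElem_append_right (by simpa using hk)]
  simp [SimpleGraph.Walk.length_darts]

lemma r_dart_lt (w w' : G.Walk v v) (k : ℕ) (hk : k < w.length)
    (h2 : k < (w.reverse.append w').darts.length) :
    (w.reverse.append w').darts[k] = (w.darts[w.length - 1 - k]'(by simp; omega)).symm := by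
  simp only [SimpleGraph.Walk.darts_append, SimpleGraph.Walk.darts_reverse]
  rw [List.getElem_append_left (by simp; omega)]
  rw [List.getElem_reverse, List.getElem_map]
  congr 1
  simp

lemma r_dart_ge (w w' : G.Walk v v) (k : ℕ) (hk : w.length ≤ k)
    (h2 : k < (w.reverse.append w').darts.length) :
    (w.reverse.append w').darts[k] = w'.darts[k - w.length]'(by
      have := h2; simp only [SimpleGraph.Walk.darts_append, List.length_append,
        SimpleGraph.Walk.length_darts, SimpleGraph.Walk.darts_reverse,
        List.length_reverse, List.length_map] at this
      simp only [SimpleGraph.Walk.length_darts]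
      omega) := by
  simp only [SimpleGraph.Walk.darts_append, SimpleGraph.Walk.darts_reverse]
  rw [List.getElem_append_right (by simp; omega)]
  congr 1
  simp

end Aux5

namespace Aux6
open SimpleGraph Aux Aux2 Aux3 Aux4 Aux5
variable {G : SimpleGraph V} {τ : Sym2 V → V → ℤˣ} {v : V}

lemma len_u (w w' : G.Walk v v) : (w.append w').length = w.length + w'.length :=
  SimpleGraph.Walk.length_append w w'

lemma len_r (w w' : G.Walk v v) :
    (w.reverse.append w').length = w.length + w'.length := by
  rw [SimpleGraph.Walk.length_append, SimpleGraph.Walk.length_reverse]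

/-- the index map transporting κ₁ to the reversed walk -/
def sig (n k : ℕ) : ℕ := if k < n then n - 1 - k else k

def kap (w w' : G.Walk v v) (κ₁ : Fin (w.append w').length → ℤˣ)
    (i : Fin (w.reverse.append w').length) : ℤˣ :=
  κ₁ ⟨sig w.length i.val, by
    have h1 := i.isLt
    have h2 := len_u w w'
    have h3 := len_r w w'
    unfold sig; split <;> omega⟩

lemma gec {α : Type*} (l : List α) {i j : ℕ} (h : i = j) (hi : i < l.length) :
    l[i]'hi = l[j]'(h ▸ hi) := by subst h; rfl

end Aux6

namespace Aux7
set_option maxHeartbeats 1000000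
open SimpleGraph Aux Aux2 Aux3 Aux4 Aux5 Aux6
variable {G : SimpleGraph V} {τ : Sym2 V → V → ℤˣ} {v : V}

lemma flip_back (x y a b : ℤˣ) (h : a = -(x * y) * b) : b = -(y * x) * a := by
  rw [h]
  rcases Int.units_eq_one_or x with rfl | rfl <;>
  rcases Int.units_eq_one_or y with rfl | rfl <;>
  rcases Int.units_eq_one_or b with rfl | rfl <;> decide

end Aux7

namespace Aux8
open SimpleGraph Aux Aux2 Aux3 Aux4 Aux5 Aux6
variable {G : SimpleGraph V} {τ : Sym2 V → V → ℤˣ} {v : V}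

lemma unit_solve {a b c : ℤˣ} (h : a * b = c) : a = c * b := by
  rw [← h, mul_assoc, Int.units_mul_self, mul_one]

lemma alg_J1 (n : ℕ) (X Y k : ℤˣ) :
    ((-1:ℤˣ)^n * ((-1:ℤˣ)^n * -1) * (X*Y)) * k = -(X*Y) * k := by
  rcases Int.units_eq_one_or ((-1:ℤˣ)^n) with h1 | h1 <;> rw [h1] <;>
  rcases Int.units_eq_one_or X with rfl | rfl <;>
  rcases Int.units_eq_one_or Y with rfl | rfl <;>
  rcases Int.units_eq_one_or k with rfl | rfl <;> decide

lemma hws_of_mu {u' v' : V} (w : G.Walk u' v') (hw : mu G τ w = -1) :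
    walkSign G τ w = (-1:ℤˣ)^w.length * -1 := by
  unfold mu at hw
  calc walkSign G τ w = ((-1:ℤˣ)^w.length * (-1:ℤˣ)^w.length) * walkSign G τ w := by
        rw [Int.units_mul_self, one_mul]
  _ = (-1:ℤˣ)^w.length * ((-1:ℤˣ)^w.length * walkSign G τ w) := mul_assoc _ _ _
  _ = (-1:ℤˣ)^w.length * -1 := by rw [hw]

lemma prefix_prod (w w' : G.Walk v v) :
    (((w.append w').darts.map (dsign τ)).take w.length).prod = walkSign G τ w := by
  rw [walkSign_eq_prod]
  congr 1
  rw [SimpleGraph.Walk.darts_append, List.map_append]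
  rw [show w.length = ((w.darts.map (dsign τ))).length by simp]
  exact List.take_left

lemma J1 (w w' : G.Walk v v) (hw : mu G τ w = -1)
    (hn : 0 < w.length) (hm : 0 < w'.length)
    (κ₁ : Fin (w.append w').length → ℤˣ) (hκ₁ : FlipRel G τ (w.append w') κ₁) :
    κ₁ ⟨w.length, by rw [len_u]; omega⟩ =
      -(τ (((w.append w').darts[0]'(by simp only [SimpleGraph.Walk.length_darts, len_u]; omega)).edge) v *
        τ (((w.append w').darts[w.length]'(by simp only [SimpleGraph.Walk.length_darts, len_u]; omega)).edge) v) *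
      κ₁ ⟨0, by rw [len_u]; omega⟩ := by
  have hu := len_u w w'
  have h0 : 0 < (w.append w').length := by omega
  have T1 := telescope (w.append w') hκ₁ h0 w.length (by omega)
  have F1 : (((w.append w').darts[0]'(by simp only [SimpleGraph.Walk.length_darts]; omega)).toProd.1) = v :=
    darts_fst_zero _ h0
  have F2 : (((w.append w').darts[w.length]'(by simp only [SimpleGraph.Walk.length_darts]; omega)).toProd.1) = v := by
    rw [u_dart_ge w w' w.length le_rfl (by simp only [SimpleGraph.Walk.length_darts]; omega)]
    rw [gec w'.darts (by omega : w.length - w.length = 0)]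
    exact darts_fst_zero w' hm
  rw [prefix_prod w w', hws_of_mu w hw, F1, F2] at T1
  have := unit_solve T1
  rw [this]
  exact alg_J1 _ _ _ _

end Aux8

namespace Aux9
open SimpleGraph Aux Aux2 Aux3 Aux4 Aux5 Aux6 Aux8
variable {G : SimpleGraph V} {τ : Sym2 V → V → ℤˣ} {v : V}

lemma alg_J2 (S A B X Y k : ℤˣ) :
    ((-1 * S) * ((S * -1) * (A*B)) * (X*A)) * (-(Y*X) * k) = -(Y*B) * k := by
  rcases Int.units_eq_one_or S with rfl | rfl <;>
  rcases Int.units_eq_one_or A with rfl | rfl <;>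
  rcases Int.units_eq_one_or B with rfl | rfl <;>
  rcases Int.units_eq_one_or X with rfl | rfl <;>
  rcases Int.units_eq_one_or Y with rfl | rfl <;>
  rcases Int.units_eq_one_or k with rfl | rfl <;> decide

lemma neg_one_pow_pred (n : ℕ) (hn : 0 < n) :
    (-1:ℤˣ)^(n-1) = -1 * (-1:ℤˣ)^n := by
  obtain ⟨p, rfl⟩ : ∃ p, n = p + 1 := ⟨n-1, by omega⟩
  rw [pow_succ, Nat.add_sub_cancel]
  rcases Int.units_eq_one_or ((-1:ℤˣ)^p) with h | h <;> rw [h] <;> decide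

lemma J2D (w w' : G.Walk v v) (hw : mu G τ w = -1)
    (hn : 0 < w.length) (hm : 0 < w'.length)
    (κ₁ : Fin (w.append w').length → ℤˣ) (hκ₁ : FlipRel G τ (w.append w') κ₁) :
    κ₁ ⟨w.length - 1, by rw [len_u]; omega⟩ =
      -(τ (((w.append w').darts[w.length + w'.length - 1]'(by
            simp only [SimpleGraph.Walk.length_darts, len_u]; omega)).edge) v *
        τ (((w.append w').darts[w.length - 1]'(by
            simp only [SimpleGraph.Walk.length_darts, len_u]; omega)).edge) v) *
      κ₁ ⟨w.length + w'.length - 1, by rw [len_u]; omega⟩ := by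
  have hu := len_u w w'
  have h0 : 0 < (w.append w').length := by omega
  have T2 := telescope (w.append w') hκ₁ h0 (w.length - 1) (by omega)
  have F1 : (((w.append w').darts[0]'(by simp only [SimpleGraph.Walk.length_darts]; omega)).toProd.1) = v :=
    darts_fst_zero _ h0
  have F4 : (((w.append w').darts[w.length - 1]'(by
      simp only [SimpleGraph.Walk.length_darts]; omega)).toProd.2) = v := by
    rw [u_dart_lt w w' (w.length - 1) (by omega) (by
      simp only [SimpleGraph.Walk.length_darts]; omega)]
    exact darts_snd_last w hn
  have F3 : (((w.append w').darts[w.length + w'.length - 1]'(by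
      simp only [SimpleGraph.Walk.length_darts]; omega)).toProd.2) = v := by
    rw [u_dart_ge w w' (w.length + w'.length - 1) (by omega) (by
      simp only [SimpleGraph.Walk.length_darts]; omega)]
    rw [gec w'.darts (by omega : w.length + w'.length - 1 - w.length = w'.length - 1)]
    exact darts_snd_last w' hm
  -- prefix product at n-1
  have hA : (((w.append w').darts.map (dsign τ)).take (w.length - 1)).prod
      = walkSign G τ w * dsign τ ((w.append w').darts[w.length - 1]'(by
          simp only [SimpleGraph.Walk.length_darts]; omega)) := by
    have h := List.prod_take_succ ((w.append w').darts.map (dsign τ)) (w.length - 1)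
      (by simp only [List.length_map, SimpleGraph.Walk.length_darts]; omega)
    rw [List.getElem_map] at h
    rw [show w.length - 1 + 1 = w.length from by omega] at h
    rw [prefix_prod w w'] at h
    exact unit_solve h.symm
  rw [hA, hws_of_mu w hw, F1] at T2
  -- wrap relation
  have ew := hκ₁ ⟨w.length + w'.length - 1, by omega⟩
  have hcs : csucc (⟨w.length + w'.length - 1, by omega⟩ : Fin (w.append w').length)
      = ⟨0, by omega⟩ := Fin.ext (csucc_val_last _ (by
        show w.length + w'.length - 1 + 1 = (w.append w').length; omega))
  rw [hcs] at ew
  simp only [dartAt_eq] at ew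
  rw [F3] at ew
  have hmain := unit_solve T2
  rw [ew] at hmain
  rw [hmain]
  unfold dsign
  rw [F4, neg_one_pow_pred w.length hn]
  exact alg_J2 _ _ _ _ _ _

end Aux9

namespace Aux10
open SimpleGraph Aux Aux2 Aux3 Aux4 Aux5 Aux6 Aux7 Aux8 Aux9
variable {G : SimpleGraph V} {τ : Sym2 V → V → ℤˣ} {v : V}
set_option maxHeartbeats 1000000

lemma fliprel_kap (w w' : G.Walk v v) (hw : mu G τ w = -1)
    (hn : 0 < w.length) (hm : 0 < w'.length)
    (κ₁ : Fin (w.append w').length → ℤˣ) (hκ₁ : FlipRel G τ (w.append w') κ₁) :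
    FlipRel G τ (w.reverse.append w') (kap w w' κ₁) := by
  intro i
  have hu := len_u w w'
  have hr := len_r w w'
  have hil := i.isLt
  by_cases hC1 : w.length ≤ i.val
  · by_cases hC2 : i.val + 1 < w.length + w'.length
    · -- case C : interior of the w' part
      have hcs : (csucc i).val = i.val + 1 := csucc_val_of_lt i (by omega)
      have e1 := hκ₁ ⟨i.val, by omega⟩
      have hcs1 : csucc (⟨i.val, by omega⟩ : Fin (w.append w').length)
          = ⟨i.val + 1, by omega⟩ := Fin.ext (csucc_val_of_lt _ (by simp; omega))
      rw [hcs1] at e1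
      simp only [dartAt_eq] at e1 ⊢
      simp only [kap, hcs]
      have hs1 : sig w.length (i.val+1) = i.val+1 := by unfold sig; rw [if_neg]; omega
      have hs2 : sig w.length i.val = i.val := by unfold sig; rw [if_neg]; omega
      simp only [hs1, hs2]
      have p1 : i.val < (w.reverse.append w').darts.length := by
        simp only [SimpleGraph.Walk.length_darts]; omega
      have p2 : i.val + 1 < (w.reverse.append w').darts.length := by
        simp only [SimpleGraph.Walk.length_darts]; omega
      have q1 : i.val < (w.append w').darts.length := by
        simp only [SimpleGraph.Walk.length_darts]; omega
      have q2 : i.val + 1 < (w.append w').darts.length := by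
        simp only [SimpleGraph.Walk.length_darts]; omega
      have hd1 : (w.reverse.append w').darts[i.val]'p1 = (w.append w').darts[i.val]'q1 := by
        rw [r_dart_ge w w' i.val hC1 p1, u_dart_ge w w' i.val hC1 q1]
      have hd2 : (w.reverse.append w').darts[i.val+1]'p2 = (w.append w').darts[i.val+1]'q2 := by
        rw [r_dart_ge w w' (i.val+1) (by omega) p2, u_dart_ge w w' (i.val+1) (by omega) q2]
      simp only [hd1, hd2]
      exact e1
    · -- case D : wrap-around
      have hiv : i.val = w.length + w'.length - 1 := by omega
      have hcs : (csucc i).val = 0 := csucc_val_last i (by omega)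
      simp only [dartAt_eq, kap, hcs]
      have hs1 : sig w.length 0 = w.length - 1 := by
        unfold sig; rw [if_pos hn]; omega
      have hs2 : sig w.length (w.length + w'.length - 1) = w.length + w'.length - 1 := by
        unfold sig; rw [if_neg (by omega)]
      simp only [hiv, hs1, hs2]
      have p1 : w.length + w'.length - 1 < (w.reverse.append w').darts.length := by
        simp only [SimpleGraph.Walk.length_darts]; omega
      have p0 : 0 < (w.reverse.append w').darts.length := by
        simp only [SimpleGraph.Walk.length_darts]; omega
      have q1 : w.length + w'.length - 1 < (w.append w').darts.length := by
        simp only [SimpleGraph.Walk.length_darts]; omega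
      have q2 : w.length - 1 < (w.append w').darts.length := by
        simp only [SimpleGraph.Walk.length_darts]; omega
      have hd1 : (w.reverse.append w').darts[w.length + w'.length - 1]'p1
          = (w.append w').darts[w.length + w'.length - 1]'q1 := by
        rw [r_dart_ge w w' _ (by omega) p1, u_dart_ge w w' _ (by omega) q1]
      have hd0 : ((w.reverse.append w').darts[0]'p0).edge
          = ((w.append w').darts[w.length - 1]'q2).edge := by
        rw [r_dart_lt w w' 0 hn p0, u_dart_lt w w' (w.length - 1) (by omega) q2,
          SimpleGraph.Dart.edge_symm]
        rw [gec w.darts (by omega : w.length - 1 - 0 = w.length - 1)]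
      have F3 : (((w.append w').darts[w.length + w'.length - 1]'q1).toProd.2) = v := by
        rw [u_dart_ge w w' (w.length + w'.length - 1) (by omega) q1]
        rw [gec w'.darts (by omega : w.length + w'.length - 1 - w.length = w'.length - 1)]
        exact darts_snd_last w' hm
      simp only [hd1, hd0, F3]
      exact J2D w w' hw hn hm κ₁ hκ₁
  · -- i.val < w.length
    by_cases hB : i.val + 1 = w.length
    · -- case B : junction
      have hcs : (csucc i).val = i.val + 1 := csucc_val_of_lt i (by omega)
      simp only [dartAt_eq, kap, hcs]
      have hs1 : sig w.length w.length = w.length := by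
        unfold sig; rw [if_neg (by omega)]
      have hs2 : sig w.length i.val = 0 := by
        unfold sig; rw [if_pos (by omega)]; omega
      simp only [hs2, hB, hs1]
      have p1 : i.val < (w.reverse.append w').darts.length := by
        simp only [SimpleGraph.Walk.length_darts]; omega
      have p2 : w.length < (w.reverse.append w').darts.length := by
        simp only [SimpleGraph.Walk.length_darts]; omega
      have q0 : 0 < (w.append w').darts.length := by
        simp only [SimpleGraph.Walk.length_darts]; omega
      have qn : w.length < (w.append w').darts.length := by
        simp only [SimpleGraph.Walk.length_darts]; omega
      have hd1e : ((w.reverse.append w').darts[i.val]'p1).edge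
          = ((w.append w').darts[0]'q0).edge := by
        rw [r_dart_lt w w' i.val (by omega) p1, u_dart_lt w w' 0 (by omega) q0,
          SimpleGraph.Dart.edge_symm]
        rw [gec w.darts (by omega : w.length - 1 - i.val = 0)]
      have hd1s : ((w.reverse.append w').darts[i.val]'p1).toProd.2 = v := by
        rw [r_dart_lt w w' i.val (by omega) p1]
        show ((w.darts[w.length - 1 - i.val]'_).symm).toProd.2 = v
        rw [gec w.darts (by omega : w.length - 1 - i.val = 0)]
        exact darts_fst_zero w hn
      have hd2 : (w.reverse.append w').darts[w.length]'p2
          = (w.append w').darts[w.length]'qn := by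
        rw [r_dart_ge w w' _ le_rfl p2, u_dart_ge w w' _ le_rfl qn]
      simp only [hd1e, hd1s, hd2]
      exact J1 w w' hw hn hm κ₁ hκ₁
    · -- case A : interior of the reversed part
      have hA : i.val + 1 < w.length := by omega
      have hcs : (csucc i).val = i.val + 1 := csucc_val_of_lt i (by omega)
      simp only [dartAt_eq, kap, hcs]
      have hs1 : sig w.length (i.val+1) = w.length - 2 - i.val := by
        unfold sig; rw [if_pos (by omega)]; omega
      have hs2 : sig w.length i.val = w.length - 1 - i.val := by
        unfold sig; rw [if_pos (by omega)]
      simp only [hs1, hs2]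
      have e1 := hκ₁ ⟨w.length - 2 - i.val, by omega⟩
      have hcs1 : csucc (⟨w.length - 2 - i.val, by omega⟩ : Fin (w.append w').length)
          = ⟨w.length - 1 - i.val, by omega⟩ :=
        Fin.ext ((csucc_val_of_lt _ (by
          show w.length - 2 - i.val + 1 < (w.append w').length; omega)).trans (by
          show w.length - 2 - i.val + 1 = w.length - 1 - i.val; omega))
      rw [hcs1] at e1
      simp only [dartAt_eq] at e1
      have q1 : w.length - 2 - i.val < (w.append w').darts.length := by
        simp only [SimpleGraph.Walk.length_darts]; omega
      have q2 : w.length - 1 - i.val < (w.append w').darts.length := by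
        simp only [SimpleGraph.Walk.length_darts]; omega
      have pw1 : w.length - 2 - i.val < w.darts.length := by
        simp only [SimpleGraph.Walk.length_darts]; omega
      have pw2 : w.length - 1 - i.val < w.darts.length := by
        simp only [SimpleGraph.Walk.length_darts]; omega
      have hu1 : (w.append w').darts[w.length - 2 - i.val]'q1
          = w.darts[w.length - 2 - i.val]'pw1 := u_dart_lt w w' _ (by omega) q1
      have hu2 : (w.append w').darts[w.length - 1 - i.val]'q2
          = w.darts[w.length - 1 - i.val]'pw2 := u_dart_lt w w' _ (by omega) q2
      have hch := darts_chain' w (w.length - 2 - i.val) (w.length - 1 - i.val)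
        (by omega) (by omega) pw1 pw2
      rw [hu1, hu2] at e1
      have p1 : i.val < (w.reverse.append w').darts.length := by
        simp only [SimpleGraph.Walk.length_darts]; omega
      have p2 : i.val + 1 < (w.reverse.append w').darts.length := by
        simp only [SimpleGraph.Walk.length_darts]; omega
      have hr1 : (w.reverse.append w').darts[i.val]'p1
          = (w.darts[w.length - 1 - i.val]'pw2).symm := by
        rw [r_dart_lt w w' i.val (by omega) p1]
      have hr2 : (w.reverse.append w').darts[i.val+1]'p2
          = (w.darts[w.length - 2 - i.val]'pw1).symm := by
        rw [r_dart_lt w w' (i.val+1) (by omega) p2]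
        rw [gec w.darts (by omega : w.length - 1 - (i.val+1) = w.length - 2 - i.val)]
      simp only [hr1, hr2, SimpleGraph.Dart.edge_symm]
      have hss : ((w.darts[w.length - 1 - i.val]'pw2).symm).toProd.2
          = (w.darts[w.length - 1 - i.val]'pw2).toProd.1 := rfl
      simp only [hss]
      rw [← hch]
      exact flip_back _ _ _ _ e1


end Aux10

namespace Aux11
open SimpleGraph Aux Aux2 Aux3 Aux4 Aux5 Aux6 Aux7 Aux8 Aux9 Aux10
variable {G : SimpleGraph V} {τ : Sym2 V → V → ℤˣ} {v : V}

lemma sig_invol (n k : ℕ) : sig n (sig n k) = k := by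
  rcases Nat.lt_or_ge k n with h | h
  · have h1 : sig n k = n - 1 - k := by unfold sig; rw [if_pos h]
    rw [h1]
    have h2 : sig n (n - 1 - k) = n - 1 - (n - 1 - k) := by
      unfold sig; rw [if_pos (by omega)]
    rw [h2]; omega
  · have h1 : sig n k = k := by unfold sig; rw [if_neg (by omega)]
    rw [h1, h1]

def Fmap (w w' : G.Walk v v) (i : Fin (w.reverse.append w').length) :
    Fin (w.append w').length :=
  ⟨sig w.length i.val, by
    have h1 := i.isLt
    have h2 := len_u w w'
    have h3 := len_r w w'
    unfold sig; split <;> omega⟩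

def Gmap (w w' : G.Walk v v) (j : Fin (w.append w').length) :
    Fin (w.reverse.append w').length :=
  ⟨sig w.length j.val, by
    have h1 := j.isLt
    have h2 := len_u w w'
    have h3 := len_r w w'
    unfold sig; split <;> omega⟩

lemma kap_eq (w w' : G.Walk v v) (κ₁ : Fin (w.append w').length → ℤˣ)
    (i : Fin (w.reverse.append w').length) :
    kap w w' κ₁ i = κ₁ (Fmap w w' i) := rfl

lemma edge_kap (w w' : G.Walk v v) (i : Fin (w.reverse.append w').length) :
    (dartAt (w.reverse.append w') i).edge = (dartAt (w.append w') (Fmap w w' i)).edge := by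
  have hu := len_u w w'
  have hr := len_r w w'
  have hil := i.isLt
  simp only [dartAt_eq, Fmap]
  rcases Nat.lt_or_ge i.val w.length with h | h
  · have hs : sig w.length i.val = w.length - 1 - i.val := by unfold sig; rw [if_pos h]
    simp only [hs]
    rw [r_dart_lt w w' i.val h (by simp only [SimpleGraph.Walk.length_darts]; omega)]
    rw [u_dart_lt w w' (w.length - 1 - i.val) (by omega)
      (by simp only [SimpleGraph.Walk.length_darts]; omega)]
    rw [SimpleGraph.Dart.edge_symm]
  · have hs : sig w.length i.val = i.val := by unfold sig; rw [if_neg (by omega)]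
    simp only [hs]
    rw [r_dart_ge w w' i.val h (by simp only [SimpleGraph.Walk.length_darts]; omega)]
    rw [u_dart_ge w w' i.val h (by simp only [SimpleGraph.Walk.length_darts]; omega)]

lemma B_reindex (K : Type*) [Field K] (w w' : G.Walk v v)
    (κ₁ : Fin (w.append w').length → ℤˣ) (c : ℤˣ) :
    ∏ i ∈ Finset.univ.filter (fun i => kap w w' κ₁ i = c),
      MvPolynomial.X (⟨(dartAt (w.reverse.append w') i).edge,
        (dartAt (w.reverse.append w') i).edge_mem⟩ : G.edgeSet) =
    ∏ i ∈ Finset.univ.filter (fun i => κ₁ i = c),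
      (MvPolynomial.X (⟨(dartAt (w.append w') i).edge,
        (dartAt (w.append w') i).edge_mem⟩ : G.edgeSet) : MvPolynomial G.edgeSet K) := by
  refine Finset.prod_nbij' (Fmap w w') (Gmap w w') ?_ ?_ ?_ ?_ ?_
  · intro a ha
    simp only [Finset.mem_filter, Finset.mem_univ, true_and] at ha ⊢
    exact ha
  · intro a ha
    simp only [Finset.mem_filter, Finset.mem_univ, true_and] at ha ⊢
    rw [kap_eq]
    have : Fmap w w' (Gmap w w' a) = a := Fin.ext (sig_invol _ _)
    rw [this]; exact ha
  · intro a _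
    exact Fin.ext (sig_invol _ _)
  · intro a _
    exact Fin.ext (sig_invol _ _)
  · intro a _
    congr 1
    exact Subtype.ext (edge_kap w w' a)

lemma Bpos_kap (K : Type*) [Field K] (w w' : G.Walk v v)
    (κ₁ : Fin (w.append w').length → ℤˣ) :
    Bpos K (w.reverse.append w') (kap w w' κ₁) = Bpos K (w.append w') κ₁ :=
  B_reindex K w w' κ₁ 1

lemma Bneg_kap (K : Type*) [Field K] (w w' : G.Walk v v)
    (κ₁ : Fin (w.append w').length → ℤˣ) :
    Bneg K (w.reverse.append w') (kap w w' κ₁) = Bneg K (w.append w') κ₁ :=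
  B_reindex K w w' κ₁ (-1)

lemma Bpos_neg (K : Type*) [Field K] {v : V} (u : G.Walk v v)
    (κ : Fin u.length → ℤˣ) : Bpos K u (-κ) = Bneg K u κ := by
  unfold Bpos Bneg
  apply Finset.prod_congr
  · apply Finset.filter_congr
    intro i _
    simp only [Pi.neg_apply]
    rcases Int.units_eq_one_or (κ i) with h | h <;> simp [h]
  · intro x _; rfl

lemma Bneg_neg (K : Type*) [Field K] {v : V} (u : G.Walk v v)
    (κ : Fin u.length → ℤˣ) : Bneg K u (-κ) = Bpos K u κ := by
  unfold Bpos Bneg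
  apply Finset.prod_congr
  · apply Finset.filter_congr
    intro i _
    simp only [Pi.neg_apply]
    rcases Int.units_eq_one_or (κ i) with h | h <;> simp [h]
  · intro x _; rfl

lemma length_pos_of_mu_neg {v : V} {u : G.Walk v v} (h : mu G τ u = -1) :
    0 < u.length := by
  by_contra hc
  have h0 : u.length = 0 := by omega
  have : u = SimpleGraph.Walk.nil := SimpleGraph.Walk.nil_iff_eq_nil.mp (SimpleGraph.Walk.length_eq_zero_iff.mp h0)
  subst this
  rw [mu] at h
  simp [walkSign] at h

end Aux11

/-- For two odd closed walks w and w' of a signed graph (G,τ) with the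
same first vertex, both w + w' and w⁻¹ + w' are even closed walks and their
associated binomials (each defined only up to an overall sign, i.e. up to the choice
of the section-parity assignment κ) satisfy B_{w⁻¹+w'} = ± B_{w+w'}. -/
theorem binomial_reverse_append [DecidableEq V] (K : Type*) [Field K]
    (G : SimpleGraph V) [Fintype G.edgeSet] (τ : Sym2 V → V → ℤˣ) (v : V)
    (w w' : G.Walk v v) (hw : mu G τ w = -1) (hw' : mu G τ w' = -1) :
    mu G τ (w.append w') = 1 ∧ mu G τ (w.reverse.append w') = 1 ∧
    ∀ (κ₁ : Fin (w.append w').length → ℤˣ)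
      (κ₂ : Fin (w.reverse.append w').length → ℤˣ),
      FlipRel G τ (w.append w') κ₁ → FlipRel G τ (w.reverse.append w') κ₂ →
      Bpos K (w.reverse.append w') κ₂ - Bneg K (w.reverse.append w') κ₂
          = Bpos K (w.append w') κ₁ - Bneg K (w.append w') κ₁ ∨
      Bpos K (w.reverse.append w') κ₂ - Bneg K (w.reverse.append w') κ₂
          = -(Bpos K (w.append w') κ₁ - Bneg K (w.append w') κ₁) := by
  have hn := Aux11.length_pos_of_mu_neg hw
  have hm := Aux11.length_pos_of_mu_neg hw'
  refine ⟨?_, ?_, ?_⟩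
  · rw [Aux.mu_append, hw, hw']; decide
  · rw [Aux.mu_append, Aux.mu_reverse, hw, hw']; decide
  · intro κ₁ κ₂ hκ₁ hκ₂
    have hflip := Aux10.fliprel_kap w w' hw hn hm κ₁ hκ₁
    rcases Aux3.fliprel_unique (w.reverse.append w') hflip hκ₂ with h | h
    · left
      rw [h, Aux11.Bpos_kap, Aux11.Bneg_kap]
    · right
      rw [h, Aux11.Bpos_neg, Aux11.Bneg_neg, Aux11.Bpos_kap, Aux11.Bneg_kap, neg_sub]
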